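/- (Jedrzejewicz–Zieliński) Let A be a UFD (an integral domain with unique factorization) and R ⊆ A a subring such that R* = A* (the units of R and of A coincide) and F(R) ∩ A = R, where F(R) is the field of fractions of R viewed inside the field of fractions of A. Then the following are equivalent: (i) every square-free element of R is square-free as an element of A; (ii) R is square-factorially closed in A, i.e., for every u ∈ A and every square-free v ∈ A, if u²v ∈ R − {0} then u ∈ R and v ∈ R. -/

import Mathlib

/-- An element `v` of an integral domain is square-free if it is nonzero and
there is no non-unit `w` with `w²` dividing `v`. -/
def SqFreeElem {A : Type*} [CommRing A] (v : A) : Prop :=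
  v ≠ 0 ∧ ∀ w : A, ¬ IsUnit w → ¬ (w * w ∣ v)

/-- `R` is square-factorially closed in `A`: for every `u ∈ A` and every
square-free `v ∈ A`, if `u²v ∈ R − {0}` then `u ∈ R` and `v ∈ R`. -/
def SqFactClosed {A : Type*} [CommRing A] (R : Subring A) : Prop :=
  ∀ u v : A, SqFreeElem v → u * u * v ∈ R → u * u * v ≠ 0 → u ∈ R ∧ v ∈ R

/-- Key divisibility lemma: in a UFD, if `u²v = a²b` with `b` having no
square non-unit factor, then `u ∣ a`. -/
lemma JZ.dvd_of_sq_eq {A : Type*} [CommRing A] [IsDomain A]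
    [UniqueFactorizationMonoid A] (u : A) :
    ∀ v a b : A, u * u * v = a * a * b → u * u * v ≠ 0 →
      (∀ w : A, ¬ IsUnit w → ¬ (w * w ∣ b)) → u ∣ a := by
  induction u using UniqueFactorizationMonoid.induction_on_prime with
  | h₁ =>
    intro v a b _ hne _
    simp at hne
  | h₂ x hx =>
    intro v a b _ _ _
    exact hx.dvd
  | h₃ x p hx hp ih =>
    intro v a b heq hne hb
    have hpa : p ∣ a := by
      by_contra hpna
      have h1 : p ∣ a * a * b := ⟨p * x * x * v, by linear_combination -heq⟩
      have hpb : p ∣ b := by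
        rcases hp.dvd_mul.mp h1 with h | h
        · rcases hp.dvd_mul.mp h with h' | h' <;> exact absurd h' hpna
        · exact h
      obtain ⟨b₁, rfl⟩ := hpb
      have h2 : p * (p * (x * x * v)) = p * (a * a * b₁) := by linear_combination heq
      have h3 : p * (x * x * v) = a * a * b₁ := mul_left_cancel₀ hp.ne_zero h2
      have h4 : p ∣ a * a * b₁ := ⟨x * x * v, h3.symm⟩
      have hpb₁ : p ∣ b₁ := by
        rcases hp.dvd_mul.mp h4 with h | h
        · rcases hp.dvd_mul.mp h with h' | h' <;> exact absurd h' hpna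
        · exact h
      obtain ⟨b₂, rfl⟩ := hpb₁
      exact hb p hp.not_unit ⟨b₂, by ring⟩
    obtain ⟨a₁, rfl⟩ := hpa
    have key : p * p * (x * x * v) = p * p * (a₁ * a₁ * b) := by linear_combination heq
    have key' : x * x * v = a₁ * a₁ * b :=
      mul_left_cancel₀ (mul_ne_zero hp.ne_zero hp.ne_zero) key
    have hne' : x * x * v ≠ 0 := by
      intro h
      apply hne
      rw [show p * x * (p * x) * v = p * p * (x * x * v) by ring, h, mul_zero]
    exact mul_dvd_mul_left p (ih v a₁ b key' hne' hb)

/-- Square-free decomposition inside a subring, via well-founded recursion. -/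
lemma JZ.exists_decomp {A : Type*} [CommRing A] [IsDomain A]
    [UniqueFactorizationMonoid A] (R : Subring A) :
    ∀ r : A, r ≠ 0 → r ∈ R → ∃ a b : A, a ∈ R ∧ b ∈ R ∧ a * a * b = r ∧
      ∀ c d : A, c ∈ R → d ∈ R → ¬ IsUnit c → c * c * d ≠ b := by
  intro r
  refine wellFounded_dvdNotUnit.induction (C := fun r : A => r ≠ 0 → r ∈ R →
      ∃ a b : A, a ∈ R ∧ b ∈ R ∧ a * a * b = r ∧
        ∀ c d : A, c ∈ R → d ∈ R → ¬ IsUnit c → c * c * d ≠ b) r ?_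
  clear r
  intro r ih hr hrR
  by_cases h : ∀ c d : A, c ∈ R → d ∈ R → ¬ IsUnit c → c * c * d ≠ r
  · exact ⟨1, r, one_mem R, hrR, by ring, h⟩
  · push_neg at h
    obtain ⟨c, d, hcR, hdR, hc, hcd⟩ := h
    have hd : d ≠ 0 := by
      intro h0
      apply hr
      rw [← hcd, h0, mul_zero]
    have hlt : DvdNotUnit d r :=
      ⟨hd, c * c, fun hu => hc (isUnit_of_mul_isUnit_left hu), by rw [← hcd]; ring⟩
    obtain ⟨a, b, haR, hbR, hab, hbmax⟩ := ih d hlt hd hdR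
    exact ⟨c * a, b, mul_mem hcR haR, hbR, by rw [← hcd, ← hab]; ring, hbmax⟩


/-- (Jedrzejewicz–Zieliński) Let `A` be a UFD and `R ⊆ A` a subring with
`R* = A*` and `F(R) ∩ A = R`. Then the square-free elements of `R` are
square-free in `A` if and only if `R` is square-factorially closed in `A`. -/
theorem jedrzejewicz_zielinski_squarefree_iff_sqFactClosed
    {A : Type*} [CommRing A] [IsDomain A] [UniqueFactorizationMonoid A]
    (R : Subring A)
    (hunits : ∀ a : A, IsUnit a → a ∈ R)
    (hfrac : ∀ a : A, (∃ r ∈ R, ∃ s ∈ R, s ≠ 0 ∧ s * a = r) → a ∈ R) :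
    (∀ r : R, SqFreeElem r → SqFreeElem (r : A)) ↔ SqFactClosed R := by
  -- units of R and A coincide
  have hunit_iff : ∀ w : R, IsUnit (w : A) → IsUnit w := by
    intro w hw
    obtain ⟨t, ht⟩ := isUnit_iff_exists.mp hw
    have htR : t ∈ R := hunits t (IsUnit.of_mul_eq_one (a := t) (w : A) ht.2)
    exact IsUnit.of_mul_eq_one (a := w) ⟨t, htR⟩ (Subtype.ext ht.1)
  constructor
  · -- (i) → (ii)
    intro hsf u v hv hmem hne
    obtain ⟨a, b, haR, hbR, hab, hbmax⟩ := JZ.exists_decomp R (u * u * v) hne hmem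
    have hbne : b ≠ 0 := by
      intro h0
      apply hne
      rw [← hab, h0, mul_zero]
    -- b is square-free as an element of R
    have hbR_sf : SqFreeElem (⟨b, hbR⟩ : R) := by
      refine ⟨fun h0 => hbne (congrArg (Subtype.val) h0), ?_⟩
      rintro w hw ⟨d, hd⟩
      have hbd : b = (w : A) * (w : A) * (d : A) := by
        have h := congrArg Subtype.val hd
        push_cast at h
        exact h
      exact hbmax w d w.2 d.2 (fun hu => hw (hunit_iff w hu)) hbd.symm
    have hbA : SqFreeElem (b : A) := hsf ⟨b, hbR⟩ hbR_sf
    have hua : u ∣ a := JZ.dvd_of_sq_eq u v a b hab.symm hne hbA.2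
    have hau : a ∣ u := JZ.dvd_of_sq_eq a b u v hab (hab ▸ hne) hv.2
    obtain ⟨c, hc⟩ := hua
    obtain ⟨e, he⟩ := hau
    have hu0 : u ≠ 0 := by
      intro h; apply hne; rw [h]; ring
    have hce : e * c = 1 := by
      have : u * (e * c) = u * 1 := by
        rw [mul_one]
        nth_rewrite 2 [he]
        rw [hc]; ring
      exact mul_left_cancel₀ hu0 this
    have heR : e ∈ R := hunits e (IsUnit.of_mul_eq_one (a := e) c hce)
    have hcR : c ∈ R := hunits c (IsUnit.of_mul_eq_one (a := c) e (by rw [mul_comm]; exact hce))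
    have huR : u ∈ R := he ▸ mul_mem haR heR
    have ha0 : a ≠ 0 := by
      intro h; apply hne; rw [← hab, h]; ring
    -- v = c * c * b
    have hveq : u * u * (c * c * b) = u * u * v := by
      rw [← hab, hc]; ring
    have hvv : v = c * c * b := (mul_left_cancel₀ (mul_ne_zero hu0 hu0) hveq).symm
    exact ⟨huR, hvv ▸ mul_mem (mul_mem hcR hcR) hbR⟩
  · -- (ii) → (i)
    intro hsfc r hr
    have rne : (r : A) ≠ 0 := fun h => hr.1 (Subtype.ext h)
    refine ⟨rne, ?_⟩
    rintro w hw ⟨t, ht⟩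
    have htne : t ≠ 0 := by
      intro h0; apply rne; rw [ht, h0, mul_zero]
    obtain ⟨s, c, _, _, hsc, hcmax⟩ := JZ.exists_decomp (⊤ : Subring A) t htne trivial
    have hc : SqFreeElem c := by
      refine ⟨?_, ?_⟩
      · intro h0; apply htne; rw [← hsc, h0, mul_zero]
      · rintro x hx ⟨d, hd⟩
        exact hcmax x d trivial trivial hx hd.symm
    have heq : (w * s) * (w * s) * c = (r : A) := by
      rw [ht, ← hsc]; ring
    have hne : (w * s) * (w * s) * c ≠ 0 := heq ▸ rne
    obtain ⟨hwsR, hcR⟩ := hsfc (w * s) c hc (heq ▸ r.2) hne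
    have hWnu : ¬ IsUnit (⟨w * s, hwsR⟩ : R) := by
      intro hU
      have : IsUnit (w * s) := hU.map R.subtype
      exact hw (isUnit_of_mul_isUnit_left this)
    refine hr.2 ⟨w * s, hwsR⟩ hWnu ⟨⟨c, hcR⟩, ?_⟩
    exact Subtype.ext (by push_cast; linear_combination -heq)
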